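/- With B_{n,k}(t) defined by B_{n,k} = B_{n-1,k-1} + (1+t)B_{n-1,k} + tB_{n-1,k+1}, B_{0,k} = [k=0], B_{n,-1} = 0, one has ∑_{k=0}^n B_{n,k}(t) (1 + t + ... + t^k) = (2t+2)^n. -/

import Mathlib

open Finset Polynomial

/-- auxiliary: the geometric partial sum. -/
@[reducible] noncomputable def gpoly (k : ℕ) : Polynomial ℚ := ∑ i ∈ range (k + 1), X ^ i

lemma gpoly_key (m : ℕ) :
    gpoly (m + 2) + (1 + X) * gpoly (m + 1) + X * gpoly m
      = (2 * X + 2) * gpoly (m + 1) := by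
  have h1 : gpoly (m + 2) = gpoly (m + 1) + X ^ (m + 2) := Finset.sum_range_succ _ _
  have h2 : gpoly (m + 1) = gpoly m + X ^ (m + 1) := Finset.sum_range_succ _ _
  rw [h1]
  rw [h2]
  ring

lemma gpoly_one : gpoly 1 = (1 + X) * gpoly 0 := by
  simp [gpoly, Finset.sum_range_succ]

theorem B_weighted_row_sum
    (B : ℕ → ℕ → Polynomial ℚ)
    (h0 : ∀ k, B 0 k = if k = 0 then 1 else 0)
    (hrec : ∀ n k, B (n + 1) (k + 1) =
      B n k + (1 + X) * B n (k + 1) + X * B n (k + 2))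
    (hbd : ∀ n, B (n + 1) 0 = (1 + X) * B n 0 + X * B n 1) :
    ∀ n, ∑ k ∈ range (n + 1), B n k * (∑ i ∈ range (k + 1), X ^ i) =
      (2 * X + 2) ^ n := by
  have hz : ∀ n k, B n (n + 1 + k) = 0 := by
    intro n
    induction n with
    | zero => intro k; rw [h0]; simp
    | succ n ih =>
      intro k
      rw [show n + 1 + 1 + k = n + 1 + k + 1 by omega, hrec]
      have e1 : B n (n + 1 + k) = 0 := ih k
      have e2 : B n (n + 1 + k + 1) = 0 := ih (k + 1)
      have e3 : B n (n + 1 + k + 2) = 0 := ih (k + 2)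
      rw [e1, e2, e3]; ring
  intro n
  induction n with
  | zero => simp [h0]
  | succ n ih =>
    show ∑ k ∈ range (n + 1 + 1), B (n + 1) k * gpoly k = (2 * X + 2) ^ (n + 1)
    have ih' : ∑ k ∈ range (n + 1), B n k * gpoly k = (2 * X + 2) ^ n := ih
    have hz1 : B n (n + 1) = 0 := by simpa using hz n 0
    have hz2 : B n (n + 1 + 1) = 0 := hz n 1
    have h1 : ∑ k ∈ range (n + 1 + 1), B (n + 1) k * gpoly k
        = (∑ k ∈ range (n + 1),
            (B n k + (1 + X) * B n (k + 1) + X * B n (k + 2)) * gpoly (k + 1))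
          + ((1 + X) * B n 0 + X * B n 1) * gpoly 0 := by
      rw [Finset.sum_range_succ', hbd]
      congr 1
      exact Finset.sum_congr rfl fun k _ => by rw [hrec]
    have h2 : ∑ k ∈ range (n + 1),
          (B n k + (1 + X) * B n (k + 1) + X * B n (k + 2)) * gpoly (k + 1)
        = (∑ k ∈ range (n + 1), B n k * gpoly (k + 1))
          + (∑ k ∈ range (n + 1), (1 + X) * (B n (k + 1) * gpoly (k + 1)))
          + ∑ k ∈ range (n + 1), X * (B n (k + 2) * gpoly (k + 1)) := by
      rw [← Finset.sum_add_distrib, ← Finset.sum_add_distrib]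
      exact Finset.sum_congr rfl fun k _ => by ring
    have hA : ∑ k ∈ range (n + 1), B n k * gpoly (k + 1)
        = (∑ k ∈ range (n + 1), B n (k + 1) * gpoly (k + 2)) + B n 0 * gpoly 1 := by
      have e1 := Finset.sum_range_succ' (fun k => B n k * gpoly (k + 1)) n
      have e2 := Finset.sum_range_succ (fun k => B n (k + 1) * gpoly (k + 2)) n
      norm_num at e1 e2
      rw [hz1] at e2
      linear_combination e1 - e2
    have hD : ∑ k ∈ range (n + 1), X * (B n (k + 2) * gpoly (k + 1))
        = (∑ k ∈ range (n + 1), X * (B n (k + 1) * gpoly k)) - X * (B n 1 * gpoly 0) := by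
      have e1 := Finset.sum_range_succ' (fun k => X * (B n (k + 1) * gpoly k)) (n + 1)
      have e2 := Finset.sum_range_succ (fun k => X * (B n (k + 1) * gpoly k)) (n + 1)
      norm_num at e1 e2
      have e1' : ∑ k ∈ range (n + 1), X * (B n (k + 1 + 1) * gpoly (k + 1))
          = ∑ k ∈ range (n + 1), X * (B n (k + 2) * gpoly (k + 1)) :=
        Finset.sum_congr rfl fun k _ => rfl
      rw [e1'] at e1
      rw [hz2] at e2
      linear_combination e2 - e1
    have hS : ∑ k ∈ range (n + 1), B n k * gpoly k
        = (∑ k ∈ range (n + 1), B n (k + 1) * gpoly (k + 1)) + B n 0 * gpoly 0 := by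
      have e1 := Finset.sum_range_succ' (fun k => B n k * gpoly k) n
      have e2 := Finset.sum_range_succ (fun k => B n (k + 1) * gpoly (k + 1)) n
      rw [hz1] at e2
      linear_combination e1 - e2
    have hE : (∑ k ∈ range (n + 1), B n (k + 1) * gpoly (k + 2))
          + (∑ k ∈ range (n + 1), (1 + X) * (B n (k + 1) * gpoly (k + 1)))
          + (∑ k ∈ range (n + 1), X * (B n (k + 1) * gpoly k))
        = (2 * X + 2) * ∑ k ∈ range (n + 1), B n (k + 1) * gpoly (k + 1) := by
      rw [Finset.mul_sum, ← Finset.sum_add_distrib, ← Finset.sum_add_distrib]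
      refine Finset.sum_congr rfl fun k _ => ?_
      linear_combination (B n (k + 1)) * gpoly_key k
    linear_combination h1 + h2 + hA + hD + hE + (2 * X + 2) * ih'
      - (2 * X + 2) * hS + B n 0 * gpoly_one
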